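/- arXiv:2505.04039 — 2 statements merged into one kernel-verified Lean document; each statement's English description precedes it below -/
import Mathlib

section
/- For every s ≥ 0 and every variable x_{i,j} (1 ≤ i ≤ n−1, 1 ≤ j ≤ v_i), the degree of Φ_s(x,z,q) in the variable x_{i,j} is strictly less than (v_i + 1)·p^s − 1. -/
open MvPolynomial Finset

/-- Dimension vector of the framed `A_{n-1}` quiver: `v i = min(i, k, n - i)`. -/
def dimv (k n i : ℕ) : ℕ := min i (min k (n - i))

/-- `c_s = (p^s - 1)·ω` where `ω = r₀/q₀` (an integer under the standing hypotheses). -/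
def cExp (p r₀ q₀ s : ℕ) : ℕ := (p ^ s - 1) * r₀ / q₀

/-- `a_s = (p^s - 1)·(1 - ω)`. -/
def aExp (p r₀ q₀ s : ℕ) : ℕ := (p ^ s - 1) - cExp p r₀ q₀ s

/-- `b_s = (p^s - 1)·(1 - 2ω)/2`. -/
def bExp (p r₀ q₀ s : ℕ) : ℕ := (p ^ s - 1 - 2 * cExp p r₀ q₀ s) / 2

/-- The coefficient ring `ℤ[z,q]`, with `z = X false` and `q = X true`. -/
abbrev Zq : Type := MvPolynomial Bool ℤ

noncomputable def Zvar : Zq := MvPolynomial.X false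
noncomputable def Qvar : Zq := MvPolynomial.X true

/-- The superpotential factor `Φ̄_s(x, z, q)`, a polynomial in the variables
`x_{i,j}` (indexed by pairs `(i,j) : ℕ × ℕ`) with coefficients in `ℤ[z,q]`. -/
noncomputable def Phibar (p r₀ q₀ k n s : ℕ) : MvPolynomial (ℕ × ℕ) Zq :=
  (∏ m ∈ Icc 1 (n - 1), ∏ j ∈ Icc 1 (dimv k n m), X (m, j)) ^ aExp p r₀ q₀ s *
  (∏ m ∈ Icc 1 (n - 1),
    ∏ ij ∈ ((Icc 1 (dimv k n m)) ×ˢ (Icc 1 (dimv k n m))).filter (fun ij => ij.1 ≠ ij.2),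
      ∏ r ∈ range (bExp p r₀ q₀ s), (X (m, ij.1) - C (Qvar ^ r) * X (m, ij.2))) *
  (∏ i ∈ Icc 1 (n - 2), ∏ a ∈ Icc 1 (dimv k n i), ∏ b ∈ Icc 1 (dimv k n (i + 1)),
      ∏ r ∈ range (cExp p r₀ q₀ s), (X (i, a) - C (Qvar ^ r) * X (i + 1, b))) *
  (∏ i ∈ Icc 1 k, ∏ r ∈ range (cExp p r₀ q₀ s),
      (C Zvar - C (Qvar ^ r) * X (k, i)) * (1 - C (Qvar ^ r) * X (n - k, i)))

/-- The Vandermonde factor `Δ(x)`. -/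
noncomputable def Vand (k n : ℕ) : MvPolynomial (ℕ × ℕ) Zq :=
  ∏ m ∈ Icc 1 (n - 1),
    ∏ ij ∈ ((Icc 1 (dimv k n m)) ×ˢ (Icc 1 (dimv k n m))).filter (fun ij => ij.1 < ij.2),
      (X (m, ij.2) - X (m, ij.1))

/-- `Φ_s = Δ · Φ̄_s`. -/
noncomputable def Phi (p r₀ q₀ k n s : ℕ) : MvPolynomial (ℕ × ℕ) Zq :=
  Vand k n * Phibar p r₀ q₀ k n s

/-- Exponent vector of the monomial `∏_{i,j} x_{i,j}^{j·p^s - 1}`. -/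
noncomputable def expVec (p k n s : ℕ) : (ℕ × ℕ) →₀ ℕ :=
  ∑ i ∈ Icc 1 (n - 1), ∑ j ∈ Icc 1 (dimv k n i), Finsupp.single (i, j) (j * p ^ s - 1)

/-- The truncation `T_s(z,q) ∈ ℤ[z,q]` of the K-theoretic vertex function of
`T*Gr(k,n)`: the coefficient of `∏ x_{i,j}^{j·p^s - 1}` in `Φ_s(x,z,q)`. -/
noncomputable def Ts (p r₀ q₀ k n s : ℕ) : Zq :=
  MvPolynomial.coeff (expVec p k n s) (Phi p r₀ q₀ k n s)


/-! ### Auxiliary lemmas for the degree bound -/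

section DegreeBoundAux

lemma deg_lin (w u v : ℕ × ℕ) (c : Zq) :
    degreeOf w (X u - C c * X v : MvPolynomial (ℕ × ℕ) Zq)
      ≤ (if w = u then 1 else 0) + (if w = v then 1 else 0) := by
  refine le_trans (degreeOf_sub_le w _ _) (max_le ?_ ?_)
  · rw [degreeOf_X]; exact Nat.le_add_right _ _
  · refine le_trans (degreeOf_mul_le _ _ _) ?_
    simp [degreeOf_X]

lemma deg_lin2 (w u : ℕ × ℕ) (c d : Zq) :
    degreeOf w (C d - C c * X u : MvPolynomial (ℕ × ℕ) Zq)
      ≤ (if w = u then 1 else 0) := by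
  refine le_trans (degreeOf_sub_le w _ _) (max_le ?_ ?_)
  · simp
  · refine le_trans (degreeOf_mul_le _ _ _) ?_
    simp [degreeOf_X]

lemma deg_lin3 (w u v : ℕ × ℕ) :
    degreeOf w (X u - X v : MvPolynomial (ℕ × ℕ) Zq)
      ≤ (if w = u then 1 else 0) + (if w = v then 1 else 0) := by
  refine le_trans (degreeOf_sub_le w _ _) (max_le ?_ ?_)
  · rw [degreeOf_X]; exact Nat.le_add_right _ _
  · rw [degreeOf_X]; exact Nat.le_add_left _ _

lemma count_fst (v j A : ℕ) (hj : j ∈ Icc 1 v) (P : ℕ × ℕ → Prop) [DecidablePred P] :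
    (∑ ij ∈ ((Icc 1 v) ×ˢ (Icc 1 v)).filter P, if j = ij.1 then A else 0)
      = ((Icc 1 v).filter (fun b => P (j, b))).card * A := by
  rw [Finset.sum_filter, Finset.sum_product]
  have h : ∀ a ∈ Icc 1 v,
      (∑ b ∈ Icc 1 v, if P (a, b) then (if j = a then A else 0) else 0)
        = if j = a then (∑ b ∈ Icc 1 v, if P (a, b) then A else 0) else 0 := by
    intro a _; by_cases h : j = a <;> simp [h]
  rw [Finset.sum_congr rfl h, Finset.sum_ite_eq, if_pos hj, ← Finset.sum_filter,
    Finset.sum_const, smul_eq_mul]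

lemma count_snd (v j A : ℕ) (hj : j ∈ Icc 1 v) (P : ℕ × ℕ → Prop) [DecidablePred P] :
    (∑ ij ∈ ((Icc 1 v) ×ˢ (Icc 1 v)).filter P, if j = ij.2 then A else 0)
      = ((Icc 1 v).filter (fun a => P (a, j))).card * A := by
  rw [Finset.sum_filter, Finset.sum_product, Finset.sum_comm]
  have h : ∀ b ∈ Icc 1 v,
      (∑ a ∈ Icc 1 v, if P (a, b) then (if j = b then A else 0) else 0)
        = if j = b then (∑ a ∈ Icc 1 v, if P (a, b) then A else 0) else 0 := by
    intro b _; by_cases h : j = b <;> simp [h]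
  rw [Finset.sum_congr rfl h, Finset.sum_ite_eq, if_pos hj, ← Finset.sum_filter,
    Finset.sum_const, smul_eq_mul]

lemma card_gtj (v j : ℕ) (h1 : 1 ≤ j) (h2 : j ≤ v) :
    ((Icc 1 v).filter (fun b => j < b)).card = v - j := by
  have e : (Icc 1 v).filter (fun b => j < b) = Icc (j + 1) v := by
    ext x; simp only [Finset.mem_filter, Finset.mem_Icc]; omega
  rw [e, Nat.card_Icc]; omega

lemma card_ltj (v j : ℕ) (h1 : 1 ≤ j) (h2 : j ≤ v) :
    ((Icc 1 v).filter (fun a => a < j)).card = j - 1 := by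
  have e : (Icc 1 v).filter (fun a => a < j) = Icc 1 (j - 1) := by
    ext x; simp only [Finset.mem_filter, Finset.mem_Icc]; omega
  rw [e, Nat.card_Icc]; omega

lemma card_nej (v j : ℕ) (h1 : 1 ≤ j) (h2 : j ≤ v) :
    ((Icc 1 v).filter (fun a => a ≠ j)).card = v - 1 := by
  rw [Finset.filter_ne', Finset.card_erase_of_mem (by simp [Finset.mem_Icc]; omega),
    Nat.card_Icc]
  omega

lemma card_jne (v j : ℕ) (h1 : 1 ≤ j) (h2 : j ≤ v) :
    ((Icc 1 v).filter (fun b => j ≠ b)).card = v - 1 := by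
  rw [Finset.filter_ne, Finset.card_erase_of_mem (by simp [Finset.mem_Icc]; omega),
    Nat.card_Icc]
  omega

lemma sum_ite_pair_le (S : Finset ℕ) (i j u c : ℕ) :
    (∑ t ∈ S, if (i, j) = (u, t) then c else 0) ≤ if i = u then c else 0 := by
  by_cases h : i = u
  · rw [if_pos h]
    calc (∑ t ∈ S, if (i, j) = (u, t) then c else 0)
        = ∑ t ∈ S, if j = t then c else 0 := by
          refine Finset.sum_congr rfl fun t _ => ?_
          by_cases ht : j = t <;> simp [h, ht, Prod.ext_iff]
      _ ≤ c := by rw [Finset.sum_ite_eq]; split <;> simp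
  · rw [if_neg h]
    exact le_of_eq (Finset.sum_eq_zero fun t _ =>
      if_neg fun he => h (congrArg Prod.fst he))

lemma quiver_ineq (k n i : ℕ) (hk : 1 ≤ k) (hn : 2 * k ≤ n) (hi1 : 1 ≤ i)
    (hi2 : i ≤ n - 1) :
    dimv k n (i - 1) + dimv k n (i + 1)
        + ((if i = k then 1 else 0) + (if i = n - k then 1 else 0))
      ≤ 2 * dimv k n i := by
  unfold dimv; split_ifs <;> omega

lemma cExp_le (p r₀ q₀ s : ℕ) (hr₀ : 0 < r₀) (hω : 2 * r₀ ≤ q₀) :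
    2 * cExp p r₀ q₀ s ≤ p ^ s - 1 := by
  unfold cExp
  have h1 : (p ^ s - 1) * r₀ / q₀ ≤ (p ^ s - 1) * r₀ / (2 * r₀) :=
    Nat.div_le_div_left hω (by omega)
  have h2 : (p ^ s - 1) * r₀ / (2 * r₀) = (p ^ s - 1) / 2 := by
    rw [Nat.mul_comm 2 r₀, ← Nat.div_div_eq_div_mul, Nat.mul_div_cancel _ hr₀]
  have h3 : 2 * ((p ^ s - 1) / 2) ≤ p ^ s - 1 := Nat.mul_div_le _ 2 |>.trans_eq (by ring_nf)
  omega

lemma arith_final (v P c b : ℕ) (hv : 1 ≤ v) (hP : 1 ≤ P) (hc : 2 * c ≤ P - 1)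
    (hb : 2 * b ≤ P - 1 - 2 * c) :
    (v - 1) + (((P - 1) - c) + 2 * (v - 1) * b + 2 * v * c) < (v + 1) * P - 1 := by
  obtain ⟨A, hA⟩ : ∃ A, P = 2 * c + A + 1 := ⟨P - 1 - 2 * c, by omega⟩
  obtain ⟨w, hw⟩ : ∃ w, v = w + 1 := ⟨v - 1, by omega⟩
  subst hA hw
  have hbA : 2 * b ≤ A := by omega
  have key : (w + 1 - 1) + (((2 * c + A + 1 - 1) - c) + 2 * (w + 1 - 1) * b + 2 * (w + 1) * c) + 2
      ≤ (w + 1 + 1) * (2 * c + A + 1) := by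
    have e1 : w + 1 - 1 = w := by omega
    have e2 : (2 * c + A + 1 - 1) - c = c + A := by omega
    rw [e1, e2]
    nlinarith
  omega

lemma bound_Vand (k n i j : ℕ) (hi : i ∈ Icc 1 (n - 1)) (hj1 : 1 ≤ j) (hj2 : j ≤ dimv k n i) :
    degreeOf (i, j) (Vand k n) ≤ dimv k n i - 1 := by
  rw [Vand]
  refine le_trans (degreeOf_prod_le _ _ _) ?_
  have step : ∀ m ∈ Icc 1 (n - 1),
      degreeOf (i, j) (∏ ij ∈ ((Icc 1 (dimv k n m)) ×ˢ (Icc 1 (dimv k n m))).filter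
          (fun ij => ij.1 < ij.2), (X (m, ij.2) - X (m, ij.1) : MvPolynomial (ℕ × ℕ) Zq))
        ≤ if m = i then dimv k n i - 1 else 0 := by
    intro m _
    refine le_trans (degreeOf_prod_le _ _ _) ?_
    refine le_trans (Finset.sum_le_sum fun ij _ => deg_lin3 (i, j) (m, ij.2) (m, ij.1)) ?_
    by_cases hmi : m = i
    · rw [hmi, if_pos rfl]
      have e : ∀ ij ∈ ((Icc 1 (dimv k n i)) ×ˢ (Icc 1 (dimv k n i))).filter
          (fun ij => ij.1 < ij.2),
          (((if (i, j) = (i, ij.2) then 1 else 0) + (if (i, j) = (i, ij.1) then 1 else 0)) : ℕ)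
            = (if j = ij.1 then 1 else 0) + (if j = ij.2 then 1 else 0) := by
        intro ij _; rw [add_comm]; simp
      rw [Finset.sum_congr rfl e, Finset.sum_add_distrib,
        count_fst _ _ _ (mem_Icc.mpr ⟨hj1, hj2⟩) _, count_snd _ _ _ (mem_Icc.mpr ⟨hj1, hj2⟩) _,
        card_gtj _ _ hj1 hj2, card_ltj _ _ hj1 hj2]
      omega
    · rw [if_neg hmi]
      exact le_of_eq (Finset.sum_eq_zero fun ij _ => by
        rw [if_neg (fun h => hmi (congrArg Prod.fst h).symm),
          if_neg (fun h => hmi (congrArg Prod.fst h).symm), add_zero])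
  refine le_trans (Finset.sum_le_sum step) ?_
  rw [Finset.sum_ite_eq' _ i _, if_pos hi]

lemma bound_F1 (p r₀ q₀ k n s i j : ℕ) :
    degreeOf (i, j) ((∏ m ∈ Icc 1 (n - 1), ∏ j' ∈ Icc 1 (dimv k n m),
        (X (m, j') : MvPolynomial (ℕ × ℕ) Zq)) ^ aExp p r₀ q₀ s)
      ≤ aExp p r₀ q₀ s := by
  refine le_trans (degreeOf_pow_le _ _ _) ?_
  have h1 : degreeOf (i, j) (∏ m ∈ Icc 1 (n - 1), ∏ j' ∈ Icc 1 (dimv k n m),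
      (X (m, j') : MvPolynomial (ℕ × ℕ) Zq)) ≤ 1 := by
    refine le_trans (degreeOf_prod_le _ _ _) ?_
    refine le_trans (Finset.sum_le_sum fun m _ => degreeOf_prod_le _ _ _) ?_
    have e : ∀ m ∈ Icc 1 (n - 1), (∑ j' ∈ Icc 1 (dimv k n m),
        degreeOf (i, j) (X (m, j') : MvPolynomial (ℕ × ℕ) Zq))
          = ∑ j' ∈ Icc 1 (dimv k n m), if (i, j) = (m, j') then 1 else 0 := by
      intro m _
      exact Finset.sum_congr rfl fun j' _ => degreeOf_X _ _
    rw [Finset.sum_congr rfl e]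
    calc (∑ m ∈ Icc 1 (n - 1), ∑ j' ∈ Icc 1 (dimv k n m), if (i, j) = (m, j') then 1 else 0)
        ≤ ∑ m ∈ Icc 1 (n - 1), if i = m then 1 else 0 :=
          Finset.sum_le_sum fun m _ => sum_ite_pair_le _ _ _ _ _
      _ ≤ 1 := by rw [Finset.sum_ite_eq]; split <;> simp
  calc aExp p r₀ q₀ s * degreeOf (i, j) _ ≤ aExp p r₀ q₀ s * 1 := Nat.mul_le_mul_left _ h1
    _ = aExp p r₀ q₀ s := Nat.mul_one _

lemma bound_F2 (p r₀ q₀ k n s i j : ℕ) (hj1 : 1 ≤ j) (hj2 : j ≤ dimv k n i) :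
    degreeOf (i, j) (∏ m ∈ Icc 1 (n - 1),
      ∏ ij ∈ ((Icc 1 (dimv k n m)) ×ˢ (Icc 1 (dimv k n m))).filter (fun ij => ij.1 ≠ ij.2),
        ∏ r ∈ range (bExp p r₀ q₀ s),
          (X (m, ij.1) - C (Qvar ^ r) * X (m, ij.2) : MvPolynomial (ℕ × ℕ) Zq))
      ≤ 2 * (dimv k n i - 1) * bExp p r₀ q₀ s := by
  set b := bExp p r₀ q₀ s with hb
  refine le_trans (degreeOf_prod_le _ _ _) ?_
  have step : ∀ m ∈ Icc 1 (n - 1),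
      degreeOf (i, j) (∏ ij ∈ ((Icc 1 (dimv k n m)) ×ˢ (Icc 1 (dimv k n m))).filter
          (fun ij => ij.1 ≠ ij.2), ∏ r ∈ range b,
          (X (m, ij.1) - C (Qvar ^ r) * X (m, ij.2) : MvPolynomial (ℕ × ℕ) Zq))
        ≤ if m = i then 2 * (dimv k n i - 1) * b else 0 := by
    intro m _
    have h1 : degreeOf (i, j) (∏ ij ∈ ((Icc 1 (dimv k n m)) ×ˢ (Icc 1 (dimv k n m))).filter
          (fun ij => ij.1 ≠ ij.2), ∏ r ∈ range b,
          (X (m, ij.1) - C (Qvar ^ r) * X (m, ij.2) : MvPolynomial (ℕ × ℕ) Zq))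
        ≤ ∑ ij ∈ ((Icc 1 (dimv k n m)) ×ˢ (Icc 1 (dimv k n m))).filter
            (fun ij => ij.1 ≠ ij.2),
            ((if (i, j) = (m, ij.1) then b else 0) + (if (i, j) = (m, ij.2) then b else 0)) := by
      refine le_trans (degreeOf_prod_le _ _ _) (Finset.sum_le_sum fun ij _ => ?_)
      refine le_trans (degreeOf_prod_le _ _ _) ?_
      refine le_trans (Finset.sum_le_sum fun r _ =>
        deg_lin (i, j) (m, ij.1) (m, ij.2) (Qvar ^ r)) ?_
      rw [Finset.sum_const, card_range, smul_eq_mul, Nat.mul_add]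
      apply add_le_add <;> · split_ifs <;> simp
    refine le_trans h1 ?_
    by_cases hmi : m = i
    · rw [hmi, if_pos rfl]
      have e : ∀ ij ∈ ((Icc 1 (dimv k n i)) ×ˢ (Icc 1 (dimv k n i))).filter
          (fun ij => ij.1 ≠ ij.2),
          (((if (i, j) = (i, ij.1) then b else 0) + (if (i, j) = (i, ij.2) then b else 0)) : ℕ)
            = (if j = ij.1 then b else 0) + (if j = ij.2 then b else 0) := by
        intro ij _; simp
      rw [Finset.sum_congr rfl e, Finset.sum_add_distrib,
        count_fst _ _ _ (mem_Icc.mpr ⟨hj1, hj2⟩) _, count_snd _ _ _ (mem_Icc.mpr ⟨hj1, hj2⟩) _,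
        card_jne _ _ hj1 hj2, card_nej _ _ hj1 hj2]
      ring_nf
      omega
    · rw [if_neg hmi]
      exact le_of_eq (Finset.sum_eq_zero fun ij _ => by
        rw [if_neg (fun h => hmi (congrArg Prod.fst h).symm),
          if_neg (fun h => hmi (congrArg Prod.fst h).symm), add_zero])
  refine le_trans (Finset.sum_le_sum step) ?_
  rw [Finset.sum_ite_eq']
  split <;> simp

lemma bound_F3 (p r₀ q₀ k n s i j : ℕ) :
    degreeOf (i, j) (∏ t ∈ Icc 1 (n - 2), ∏ a ∈ Icc 1 (dimv k n t),
        ∏ b ∈ Icc 1 (dimv k n (t + 1)), ∏ r ∈ range (cExp p r₀ q₀ s),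
          (X (t, a) - C (Qvar ^ r) * X (t + 1, b) : MvPolynomial (ℕ × ℕ) Zq))
      ≤ dimv k n (i + 1) * cExp p r₀ q₀ s + dimv k n (i - 1) * cExp p r₀ q₀ s := by
  set c := cExp p r₀ q₀ s with hc
  refine le_trans (degreeOf_prod_le _ _ _) ?_
  have step : ∀ t ∈ Icc 1 (n - 2),
      degreeOf (i, j) (∏ a ∈ Icc 1 (dimv k n t), ∏ b ∈ Icc 1 (dimv k n (t + 1)),
        ∏ r ∈ range c, (X (t, a) - C (Qvar ^ r) * X (t + 1, b) : MvPolynomial (ℕ × ℕ) Zq))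
        ≤ (if i = t then dimv k n (i + 1) * c else 0)
          + (if i - 1 = t then dimv k n (i - 1) * c else 0) := by
    intro t _
    have h1 : degreeOf (i, j) (∏ a ∈ Icc 1 (dimv k n t), ∏ b ∈ Icc 1 (dimv k n (t + 1)),
        ∏ r ∈ range c, (X (t, a) - C (Qvar ^ r) * X (t + 1, b) : MvPolynomial (ℕ × ℕ) Zq))
        ≤ ∑ a ∈ Icc 1 (dimv k n t), ∑ b ∈ Icc 1 (dimv k n (t + 1)),
            ((if (i, j) = (t, a) then c else 0) + (if (i, j) = (t + 1, b) then c else 0)) := by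
      refine le_trans (degreeOf_prod_le _ _ _) (Finset.sum_le_sum fun a _ => ?_)
      refine le_trans (degreeOf_prod_le _ _ _) (Finset.sum_le_sum fun b _ => ?_)
      refine le_trans (degreeOf_prod_le _ _ _) ?_
      refine le_trans (Finset.sum_le_sum fun r _ =>
        deg_lin (i, j) (t, a) (t + 1, b) (Qvar ^ r)) ?_
      rw [Finset.sum_const, card_range, smul_eq_mul, Nat.mul_add]
      apply add_le_add <;> · split_ifs <;> simp
    refine le_trans h1 ?_
    have split2 : (∑ a ∈ Icc 1 (dimv k n t), ∑ b ∈ Icc 1 (dimv k n (t + 1)),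
        ((if (i, j) = (t, a) then c else 0) + (if (i, j) = (t + 1, b) then c else 0)))
        = (∑ a ∈ Icc 1 (dimv k n t), ∑ b ∈ Icc 1 (dimv k n (t + 1)),
            (if (i, j) = (t, a) then c else 0))
          + (∑ a ∈ Icc 1 (dimv k n t), ∑ b ∈ Icc 1 (dimv k n (t + 1)),
            (if (i, j) = (t + 1, b) then c else 0)) := by
      rw [← Finset.sum_add_distrib]
      exact Finset.sum_congr rfl fun a _ => Finset.sum_add_distrib
    rw [split2]
    refine add_le_add ?_ ?_
    · calc (∑ a ∈ Icc 1 (dimv k n t), ∑ _b ∈ Icc 1 (dimv k n (t + 1)),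
            (if (i, j) = (t, a) then c else 0))
          = ∑ a ∈ Icc 1 (dimv k n t), dimv k n (t + 1) * (if (i, j) = (t, a) then c else 0) := by
            refine Finset.sum_congr rfl fun a _ => ?_
            rw [Finset.sum_const, Nat.card_Icc, smul_eq_mul]
            congr 1
        _ = dimv k n (t + 1) * ∑ a ∈ Icc 1 (dimv k n t), (if (i, j) = (t, a) then c else 0) :=
            (Finset.mul_sum _ _ _).symm
        _ ≤ dimv k n (t + 1) * (if i = t then c else 0) :=
            Nat.mul_le_mul_left _ (sum_ite_pair_le _ _ _ _ _)
        _ ≤ (if i = t then dimv k n (i + 1) * c else 0) := by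
            by_cases h : i = t <;> simp [h]
    · calc (∑ _a ∈ Icc 1 (dimv k n t), ∑ b ∈ Icc 1 (dimv k n (t + 1)),
            (if (i, j) = (t + 1, b) then c else 0))
          ≤ ∑ _a ∈ Icc 1 (dimv k n t), (if i = t + 1 then c else 0) :=
            Finset.sum_le_sum fun a _ => sum_ite_pair_le _ _ _ _ _
        _ = dimv k n t * (if i = t + 1 then c else 0) := by
            rw [Finset.sum_const, Nat.card_Icc, smul_eq_mul]
            congr 1
        _ ≤ (if i - 1 = t then dimv k n (i - 1) * c else 0) := by
            by_cases h : i = t + 1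
            · have e : i - 1 = t := by omega
              simp [h, e]
            · simp [h]
  refine le_trans (Finset.sum_le_sum step) ?_
  rw [Finset.sum_add_distrib, Finset.sum_ite_eq, Finset.sum_ite_eq]
  refine add_le_add ?_ ?_ <;> · split <;> simp

lemma bound_F4 (p r₀ q₀ k n s i j : ℕ) :
    degreeOf (i, j) (∏ t ∈ Icc 1 k, ∏ r ∈ range (cExp p r₀ q₀ s),
        ((C Zvar - C (Qvar ^ r) * X (k, t)) * (1 - C (Qvar ^ r) * X (n - k, t)) :
          MvPolynomial (ℕ × ℕ) Zq))
      ≤ (if i = k then 1 else 0) * cExp p r₀ q₀ s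
        + (if i = n - k then 1 else 0) * cExp p r₀ q₀ s := by
  refine le_trans (degreeOf_prod_le _ _ _) ?_
  have step : ∀ t ∈ Icc 1 k,
      degreeOf (i, j) (∏ r ∈ range (cExp p r₀ q₀ s),
        ((C Zvar - C (Qvar ^ r) * X (k, t)) * (1 - C (Qvar ^ r) * X (n - k, t)) :
          MvPolynomial (ℕ × ℕ) Zq))
        ≤ (if (i, j) = (k, t) then cExp p r₀ q₀ s else 0)
          + (if (i, j) = (n - k, t) then cExp p r₀ q₀ s else 0) := by
    intro t _
    refine le_trans (degreeOf_prod_le _ _ _) ?_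
    have hfac : ∀ r ∈ range (cExp p r₀ q₀ s),
        degreeOf (i, j) (((C Zvar - C (Qvar ^ r) * X (k, t)) *
          (1 - C (Qvar ^ r) * X (n - k, t))) : MvPolynomial (ℕ × ℕ) Zq)
          ≤ (if (i, j) = (k, t) then 1 else 0) + (if (i, j) = (n - k, t) then 1 else 0) := by
      intro r _
      refine le_trans (degreeOf_mul_le _ _ _) (add_le_add (deg_lin2 _ _ _ _) ?_)
      rw [show (1 : MvPolynomial (ℕ × ℕ) Zq) = C 1 from (map_one C).symm]
      exact deg_lin2 _ _ _ _
    refine le_trans (Finset.sum_le_sum hfac) ?_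
    rw [Finset.sum_const, card_range, smul_eq_mul, Nat.mul_add]
    apply add_le_add <;> · split_ifs <;> simp
  refine le_trans (Finset.sum_le_sum step) ?_
  rw [Finset.sum_add_distrib]
  refine add_le_add (le_trans (sum_ite_pair_le _ _ _ _ _) ?_)
    (le_trans (sum_ite_pair_le _ _ _ _ _) ?_)
  · split_ifs <;> simp
  · split_ifs <;> simp

end DegreeBoundAux

/-- Degree bound: for every `s ≥ 0` and variable `x_{i,j}` with `1 ≤ i ≤ n-1`,
`1 ≤ j ≤ v_i`, the degree of `Φ_s` in `x_{i,j}` is `< (v_i + 1)·p^s - 1`. -/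
theorem degree_bound (p r₀ q₀ k n : ℕ) (hp : p.Prime) (hodd : Odd p)
    (hr₀ : 0 < r₀) (hq₀ : 0 < q₀) (hω : 2 * r₀ ≤ q₀) (hcong : p ≡ 1 [MOD q₀])
    (hk : 1 ≤ k) (hn : 2 * k ≤ n) (s : ℕ) (i j : ℕ)
    (hi1 : 1 ≤ i) (hi2 : i ≤ n - 1) (hj1 : 1 ≤ j) (hj2 : j ≤ dimv k n i) :
    MvPolynomial.degreeOf (i, j) (Phi p r₀ q₀ k n s) < (dimv k n i + 1) * p ^ s - 1 := by
  have hiI : i ∈ Icc 1 (n - 1) := mem_Icc.mpr ⟨hi1, hi2⟩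
  have hv1 : 1 ≤ dimv k n i := le_trans hj1 hj2
  have hP : 1 ≤ p ^ s := Nat.one_le_pow _ _ hp.pos
  have hc2 : 2 * cExp p r₀ q₀ s ≤ p ^ s - 1 := cExp_le p r₀ q₀ s hr₀ hω
  have hb2 : 2 * bExp p r₀ q₀ s ≤ p ^ s - 1 - 2 * cExp p r₀ q₀ s := by
    rw [bExp]; omega
  have hV : degreeOf (i, j) (Vand k n) ≤ dimv k n i - 1 := bound_Vand k n i j hiI hj1 hj2
  have hPB : degreeOf (i, j) (Phibar p r₀ q₀ k n s) ≤
      aExp p r₀ q₀ s + 2 * (dimv k n i - 1) * bExp p r₀ q₀ s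
        + (dimv k n (i + 1) * cExp p r₀ q₀ s + dimv k n (i - 1) * cExp p r₀ q₀ s)
        + ((if i = k then 1 else 0) * cExp p r₀ q₀ s
            + (if i = n - k then 1 else 0) * cExp p r₀ q₀ s) := by
    rw [Phibar]
    refine le_trans (degreeOf_mul_le _ _ _) (add_le_add (le_trans (degreeOf_mul_le _ _ _)
      (add_le_add (le_trans (degreeOf_mul_le _ _ _)
        (add_le_add (bound_F1 p r₀ q₀ k n s i j) (bound_F2 p r₀ q₀ k n s i j hj1 hj2)))
        (bound_F3 p r₀ q₀ k n s i j))) (bound_F4 p r₀ q₀ k n s i j))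
  have hq := quiver_ineq k n i hk hn hi1 hi2
  have hcterm : dimv k n (i + 1) * cExp p r₀ q₀ s + dimv k n (i - 1) * cExp p r₀ q₀ s
      + ((if i = k then 1 else 0) * cExp p r₀ q₀ s
          + (if i = n - k then 1 else 0) * cExp p r₀ q₀ s)
      ≤ 2 * dimv k n i * cExp p r₀ q₀ s := by
    calc dimv k n (i + 1) * cExp p r₀ q₀ s + dimv k n (i - 1) * cExp p r₀ q₀ s
        + ((if i = k then 1 else 0) * cExp p r₀ q₀ s
            + (if i = n - k then 1 else 0) * cExp p r₀ q₀ s)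
        = (dimv k n (i - 1) + dimv k n (i + 1)
            + ((if i = k then 1 else 0) + (if i = n - k then 1 else 0))) * cExp p r₀ q₀ s := by
          ring
      _ ≤ (2 * dimv k n i) * cExp p r₀ q₀ s := Nat.mul_le_mul_right _ hq
  have harith := arith_final (dimv k n i) (p ^ s) (cExp p r₀ q₀ s) (bExp p r₀ q₀ s)
    hv1 hP hc2 hb2
  calc degreeOf (i, j) (Phi p r₀ q₀ k n s)
      ≤ degreeOf (i, j) (Vand k n) + degreeOf (i, j) (Phibar p r₀ q₀ k n s) := by
        rw [Phi]; exact degreeOf_mul_le _ _ _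
    _ ≤ (dimv k n i - 1) + (aExp p r₀ q₀ s + 2 * (dimv k n i - 1) * bExp p r₀ q₀ s
          + 2 * dimv k n i * cExp p r₀ q₀ s) := by
        refine add_le_add hV (le_trans hPB ?_)
        rw [add_assoc (aExp p r₀ q₀ s + 2 * (dimv k n i - 1) * bExp p r₀ q₀ s)]
        exact add_le_add_right hcterm _
    _ < (dimv k n i + 1) * p ^ s - 1 := by
        have e : aExp p r₀ q₀ s = (p ^ s - 1) - cExp p r₀ q₀ s := rfl
        rw [e]
        exact harith
end

section
/- Let 1 ≤ l ≤ s and let ζ ∈ ℂ be a primitive p^l-th root of unity. Then, evaluating q at ζ, the polynomial identity Φ_{s+1}(x, z, ζ) · Φ_{s−1}(x^p, z^p, ζ^p) = Φ_s(x, z, ζ) · Φ_s(x^p, z^p, ζ^p) holds in ℂ[x, z], where x^p denotes the substitution replacing every variable x_{i,j} by x_{i,j}^p. -/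
open MvPolynomial Finset

/-- The substitution `ℤ[x,z,q] → ℂ[x,z]` sending `q ↦ ζ`, `z ↦ z^e`, and every
variable `x_{i,j} ↦ x_{i,j}^e`. -/
noncomputable def substC (ζ : ℂ) (e : ℕ) :
    MvPolynomial (ℕ × ℕ) Zq →+* MvPolynomial (ℕ × ℕ) (Polynomial ℂ) :=
  MvPolynomial.eval₂Hom
    ((MvPolynomial.C : Polynomial ℂ →+* MvPolynomial (ℕ × ℕ) (Polynomial ℂ)).comp
      (MvPolynomial.eval₂Hom (Int.castRingHom (Polynomial ℂ))
        (fun b => bif b then Polynomial.C ζ else Polynomial.X ^ e)))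
    (fun ij => MvPolynomial.X ij ^ e)


section AuxRootLemmas

variable {R : Type*} [CommRing R] [IsDomain R]

lemma prod_range_root (x y : R) {ζ : R} {N : ℕ} (hN : 0 < N) (h : IsPrimitiveRoot ζ N) :
    ∏ i ∈ range N, (x - ζ ^ i * y) = x ^ N - y ^ N := by
  classical
  have himg : (range N).image (ζ ^ ·) = Polynomial.nthRootsFinset N (1 : R) := by
    apply Finset.eq_of_subset_of_card_le
    · intro μ hμ
      simp only [Finset.mem_image, mem_range] at hμ
      obtain ⟨i, _, rfl⟩ := hμ
      exact (Polynomial.mem_nthRootsFinset hN (1 : R)).2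
        (by rw [← pow_mul, mul_comm, pow_mul, h.pow_eq_one, one_pow])
    · rw [h.card_nthRootsFinset,
        Finset.card_image_of_injOn (fun i hi j hj hij => h.injOn_pow (by simpa using hi)
          (by simpa using hj) hij), Finset.card_range]
  rw [IsPrimitiveRoot.pow_sub_pow_eq_prod_sub_mul x y hN h, ← himg,
    Finset.prod_image (fun i hi j hj hij => h.injOn_pow (by simpa using hi)
      (by simpa using hj) hij)]

lemma prod_range_root_shift (x y : R) {ζ : R} {N : ℕ} (hN : 0 < N) (h : IsPrimitiveRoot ζ N)
    (d : ℕ) : ∏ i ∈ range N, (x - ζ ^ (d + i) * y) = x ^ N - y ^ N := by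
  have hz : ∀ i, ζ ^ (d + i) * y = ζ ^ i * (ζ ^ d * y) := fun i => by rw [pow_add]; ring
  simp_rw [hz]
  rw [prod_range_root x (ζ ^ d * y) hN h, mul_pow, ← pow_mul, mul_comm d N, pow_mul,
    h.pow_eq_one, one_pow, one_mul]

lemma prod_range_root_chunk (x y : R) {ζ : R} {N : ℕ} (hN : 0 < N) (h : IsPrimitiveRoot ζ N)
    (d t : ℕ) : ∏ i ∈ range (t * N), (x - ζ ^ (d + i) * y) = (x ^ N - y ^ N) ^ t := by
  induction t with
  | zero => simp
  | succ t ih =>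
    rw [Nat.succ_mul, Finset.prod_range_add, ih, pow_succ]
    congr 1
    rw [← prod_range_root_shift x y hN h (d + t * N)]
    exact Finset.prod_congr rfl fun i _ => by rw [add_assoc]

lemma cross_prod {ζ : R} {p l : ℕ} (hp : 0 < p) (hl : 1 ≤ l)
    (h : IsPrimitiveRoot ζ (p ^ l)) {s : ℕ} (hls : l ≤ s) (w : ℕ) (x y : R) :
    (∏ i ∈ range (w * ∑ j ∈ range (s + 1), p ^ j), (x - ζ ^ i * y)) *
      ∏ i ∈ range (w * ∑ j ∈ range (s - 1), p ^ j), (x ^ p - (ζ ^ p) ^ i * y ^ p) =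
    (∏ i ∈ range (w * ∑ j ∈ range s, p ^ j), (x - ζ ^ i * y)) *
      ∏ i ∈ range (w * ∑ j ∈ range s, p ^ j), (x ^ p - (ζ ^ p) ^ i * y ^ p) := by
  obtain ⟨m, rfl⟩ : ∃ m, l = m + 1 := ⟨l - 1, by omega⟩
  obtain ⟨t, rfl⟩ : ∃ t, s = t + 1 := ⟨s - 1, by omega⟩
  have hNpos : 0 < p ^ (m + 1) := pow_pos hp _
  have hN1 : 0 < p ^ m := pow_pos hp _
  have hζp : IsPrimitiveRoot (ζ ^ p) (p ^ m) := h.pow hNpos (by rw [pow_succ'])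
  have e1 : w * ∑ j ∈ range (t + 1 + 1), p ^ j
      = w * ∑ j ∈ range (t + 1), p ^ j + (w * p ^ (t - m)) * p ^ (m + 1) := by
    rw [Finset.sum_range_succ, Nat.mul_add]
    congr 1
    rw [mul_assoc, ← pow_add]
    congr 2
    omega
  have e2 : w * ∑ j ∈ range (t + 1), p ^ j
      = w * ∑ j ∈ range (t + 1 - 1), p ^ j + (w * p ^ (t - m)) * p ^ m := by
    simp only [Nat.add_sub_cancel]
    rw [Finset.sum_range_succ, Nat.mul_add]
    congr 1
    rw [mul_assoc, ← pow_add]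
    congr 2
    omega
  have c1 : ∏ i ∈ range (w * ∑ j ∈ range (t + 1 + 1), p ^ j), (x - ζ ^ i * y)
      = (∏ i ∈ range (w * ∑ j ∈ range (t + 1), p ^ j), (x - ζ ^ i * y)) *
        (x ^ p ^ (m + 1) - y ^ p ^ (m + 1)) ^ (w * p ^ (t - m)) := by
    rw [e1, Finset.prod_range_add]
    congr 1
    exact prod_range_root_chunk x y hNpos h _ _
  have c2 : ∏ i ∈ range (w * ∑ j ∈ range (t + 1), p ^ j), (x ^ p - (ζ ^ p) ^ i * y ^ p)
      = (∏ i ∈ range (w * ∑ j ∈ range (t + 1 - 1), p ^ j), (x ^ p - (ζ ^ p) ^ i * y ^ p)) *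
        (x ^ p ^ (m + 1) - y ^ p ^ (m + 1)) ^ (w * p ^ (t - m)) := by
    rw [e2, Finset.prod_range_add]
    congr 1
    rw [prod_range_root_chunk (x ^ p) (y ^ p) hN1 hζp _ _, ← pow_mul, ← pow_mul, ← pow_succ']
  rw [c1, c2]
  ring

end AuxRootLemmas

lemma exp_closed (p r₀ q₀ : ℕ) (hp : 1 < p) (hodd : Odd p) (hq₀ : 0 < q₀)
    (hcong : p ≡ 1 [MOD q₀]) :
    ∃ wa wb wc : ℕ,
      (∀ s, aExp p r₀ q₀ s = wa * ∑ j ∈ Finset.range s, p ^ j) ∧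
      (∀ s, bExp p r₀ q₀ s = wb * ∑ j ∈ Finset.range s, p ^ j) ∧
      (∀ s, cExp p r₀ q₀ s = wc * ∑ j ∈ Finset.range s, p ^ j) := by
  obtain ⟨q, rfl⟩ : ∃ q, p = q + 1 := ⟨p - 1, by omega⟩
  have hqe : q % 2 = 0 := by
    rcases hodd with ⟨t, ht⟩; omega
  have hdvd : q₀ ∣ q := by
    have := (Nat.modEq_iff_dvd' (by omega : 1 ≤ q + 1)).mp hcong.symm
    simpa using this
  obtain ⟨m, hm⟩ := hdvd
  have hgeom : ∀ s, (q + 1) ^ s = q * ∑ j ∈ Finset.range s, (q + 1) ^ j + 1 := by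
    intro s
    induction s with
    | zero => simp
    | succ s ih =>
      rw [Finset.sum_range_succ, Nat.mul_add, add_right_comm, ← ih, pow_succ]
      ring
  have hsub : ∀ s, (q + 1) ^ s - 1 = q * ∑ j ∈ Finset.range s, (q + 1) ^ j := by
    intro s; rw [hgeom s]; omega
  have hc : ∀ s, cExp (q + 1) r₀ q₀ s = (m * r₀) * ∑ j ∈ Finset.range s, (q + 1) ^ j := by
    intro s
    show ((q + 1) ^ s - 1) * r₀ / q₀ = _
    rw [hsub s]
    generalize (∑ j ∈ Finset.range s, (q + 1) ^ j) = S
    rw [hm, show q₀ * m * S * r₀ = q₀ * (m * r₀ * S) by ring,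
      Nat.mul_div_cancel_left _ hq₀]
  refine ⟨q - m * r₀, (q - 2 * (m * r₀)) / 2, m * r₀, fun s => ?_, fun s => ?_, hc⟩
  · show ((q + 1) ^ s - 1) - cExp (q + 1) r₀ q₀ s = _
    rw [hsub s, hc s, ← Nat.sub_mul]
  · show ((q + 1) ^ s - 1 - 2 * cExp (q + 1) r₀ q₀ s) / 2 = _
    rw [hsub s, hc s, show 2 * ((m * r₀) * ∑ j ∈ Finset.range s, (q + 1) ^ j)
        = (2 * (m * r₀)) * ∑ j ∈ Finset.range s, (q + 1) ^ j by ring, ← Nat.sub_mul]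
    have h2 : 2 ∣ q - 2 * (m * r₀) := by
      generalize m * r₀ = c
      omega
    obtain ⟨wb, hwb⟩ := h2
    rw [hwb, show 2 * wb * ∑ j ∈ Finset.range s, (q + 1) ^ j
        = 2 * (wb * ∑ j ∈ Finset.range s, (q + 1) ^ j) by ring,
      Nat.mul_div_cancel_left _ (by norm_num), Nat.mul_div_cancel_left _ (by norm_num)]

lemma substC_X' (ζ' : ℂ) (e : ℕ) (ij : ℕ × ℕ) :
    substC ζ' e (X ij) = X ij ^ e := by
  simp [substC]

lemma substC_CQ1 (ζ' : ℂ) (e : ℕ) :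
    substC ζ' e (C Qvar) = C (Polynomial.C ζ') := by
  simp [substC, Qvar]

lemma substC_CQ (ζ' : ℂ) (e r : ℕ) :
    substC ζ' e (C (Qvar ^ r)) = C (Polynomial.C ζ') ^ r := by
  simp [substC, Qvar]

lemma substC_CZ (ζ' : ℂ) (e : ℕ) :
    substC ζ' e (C Zvar) = C (Polynomial.X : Polynomial ℂ) ^ e := by
  simp [substC, Zvar]

lemma phibar_cross (p r₀ q₀ k n : ℕ) (hp : p.Prime) (hodd : Odd p)
    (hq₀ : 0 < q₀) (hcong : p ≡ 1 [MOD q₀])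
    (l s : ℕ) (hl : 1 ≤ l) (hls : l ≤ s) (ζ : ℂ) (hζ : IsPrimitiveRoot ζ (p ^ l)) :
    substC ζ 1 (Phibar p r₀ q₀ k n (s + 1)) * substC (ζ ^ p) p (Phibar p r₀ q₀ k n (s - 1)) =
      substC ζ 1 (Phibar p r₀ q₀ k n s) * substC (ζ ^ p) p (Phibar p r₀ q₀ k n s) := by
  obtain ⟨wa, wb, wc, hA, hB, hC⟩ := exp_closed p r₀ q₀ hp.one_lt hodd hq₀ hcong
  have hinj : Function.Injective
      ((MvPolynomial.C : Polynomial ℂ →+* MvPolynomial (ℕ × ℕ) (Polynomial ℂ)).comp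
        (Polynomial.C : ℂ →+* Polynomial ℂ)) :=
    (MvPolynomial.C_injective _ _).comp Polynomial.C_injective
  have hξ : IsPrimitiveRoot
      (C (Polynomial.C ζ) : MvPolynomial (ℕ × ℕ) (Polynomial ℂ)) (p ^ l) :=
    hζ.map_of_injective hinj
  have hCp : (C (Polynomial.C (ζ ^ p)) : MvPolynomial (ℕ × ℕ) (Polynomial ℂ))
      = (C (Polynomial.C ζ)) ^ p := by rw [map_pow, map_pow]
  have crossR := fun (w : ℕ) (x y : MvPolynomial (ℕ × ℕ) (Polynomial ℂ)) =>
    cross_prod hp.pos hl hξ hls w x y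
  simp only [Phibar, map_mul, map_pow, map_prod, map_sub, map_one, substC_X', substC_CQ,
    substC_CZ, substC_CQ1, hCp, pow_one, hA, hB, hC]
  have rearr : ∀ a b c d a' b' c' d' : MvPolynomial (ℕ × ℕ) (Polynomial ℂ),
      a * b * c * d * (a' * b' * c' * d')
        = (a * a') * ((b * b') * ((c * c') * (d * d'))) := by intros; ring
  rw [rearr, rearr]
  refine congr_arg₂ (· * ·) ?_ (congr_arg₂ (· * ·) ?_ (congr_arg₂ (· * ·) ?_ ?_))
  · -- monomial block
    simp only [Finset.prod_pow]
    rw [← pow_mul, ← pow_mul, ← pow_add, ← pow_add]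
    congr 1
    obtain ⟨t, rfl⟩ : ∃ t, s = t + 1 := ⟨s - 1, by omega⟩
    simp only [Nat.add_sub_cancel, geom_sum_succ]
    ring
  · -- b block
    rw [← Finset.prod_mul_distrib, ← Finset.prod_mul_distrib]
    refine Finset.prod_congr rfl fun m _ => ?_
    rw [← Finset.prod_mul_distrib, ← Finset.prod_mul_distrib]
    refine Finset.prod_congr rfl fun ij _ => ?_
    exact crossR wb (X (m, ij.1)) (X (m, ij.2))
  · -- c block
    rw [← Finset.prod_mul_distrib, ← Finset.prod_mul_distrib]
    refine Finset.prod_congr rfl fun i _ => ?_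
    rw [← Finset.prod_mul_distrib, ← Finset.prod_mul_distrib]
    refine Finset.prod_congr rfl fun a _ => ?_
    rw [← Finset.prod_mul_distrib, ← Finset.prod_mul_distrib]
    refine Finset.prod_congr rfl fun b _ => ?_
    exact crossR wc (X (i, a)) (X (i + 1, b))
  · -- z block
    simp only [Finset.prod_mul_distrib]
    conv_lhs => rw [mul_mul_mul_comm]
    conv_rhs => rw [mul_mul_mul_comm]
    refine congr_arg₂ (· * ·) ?_ ?_
    · rw [← Finset.prod_mul_distrib, ← Finset.prod_mul_distrib]
      refine Finset.prod_congr rfl fun i _ => ?_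
      exact crossR wc (C Polynomial.X) (X (k, i))
    · rw [← Finset.prod_mul_distrib, ← Finset.prod_mul_distrib]
      refine Finset.prod_congr rfl fun i _ => ?_
      have := crossR wc 1 (X (n - k, i))
      simpa using this

/-- At a primitive `p^l`-th root of unity `ζ` (with `1 ≤ l ≤ s`):
`Φ_{s+1}(x,z,ζ)·Φ_{s-1}(x^p,z^p,ζ^p) = Φ_s(x,z,ζ)·Φ_s(x^p,z^p,ζ^p)` in `ℂ[x,z]`. -/
theorem phi_cross_identity (p r₀ q₀ k n : ℕ) (hp : p.Prime) (hodd : Odd p)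
    (hr₀ : 0 < r₀) (hq₀ : 0 < q₀) (hω : 2 * r₀ ≤ q₀) (hcong : p ≡ 1 [MOD q₀])
    (hk : 1 ≤ k) (hn : 2 * k ≤ n) (l s : ℕ) (hl : 1 ≤ l) (hls : l ≤ s)
    (ζ : ℂ) (hζ : IsPrimitiveRoot ζ (p ^ l)) :
    substC ζ 1 (Phi p r₀ q₀ k n (s + 1)) * substC (ζ ^ p) p (Phi p r₀ q₀ k n (s - 1)) =
      substC ζ 1 (Phi p r₀ q₀ k n s) * substC (ζ ^ p) p (Phi p r₀ q₀ k n s) := by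
  simp only [Phi, map_mul]
  conv_lhs => rw [mul_mul_mul_comm]
  conv_rhs => rw [mul_mul_mul_comm]
  exact congr_arg₂ (· * ·) rfl
    (phibar_cross p r₀ q₀ k n hp hodd hq₀ hcong l s hl hls ζ hζ)
end
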